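/- Let $0 < s, t \le 1$ and $p \in (0,1]$. Define $C(s,t) = p^2(s^{-1}\wedge t^{-1} - 1) + p(1-p)(s^{-1}\wedge t^{-1} - 1) + p(1-p)I_1(s,t) - \frac{1}{s}p(1-p)I_2(s,t) - \frac{1}{t}p(1-p)I_3(s,t)$, where for $s \le t$: $I_1(s,t) = \int_t^1\int_s^1 \frac{x\wedge y}{x^2y^2}dx\,dy$, $I_2(s,t) = \int_t^1 \frac{s\wedge u - su}{u^2}du$, $I_3(s,t) = \int_s^1 \frac{t\wedge u - tu}{u^2}du$ (and symmetrically for $t \le s$). Then $C(s,t) = p(s^{-1}\wedge t^{-1} - 1)$. -/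

import Mathlib

open intervalIntegral Real

-- generic FTC helper: ∫ f over [a,b] with antiderivative F, f continuous on [a,b] ⊆ (0,∞)

lemma myI2 (s t : ℝ) (hs : 0 < s) (hst : s ≤ t) (ht : t ≤ 1) :
    (∫ u in t..1, (min s u - s * u) / u ^ 2) = s / t - s + s * Real.log t := by
  have ht0 : 0 < t := hs.trans_le hst
  have huIcc : Set.uIcc t 1 = Set.Icc t 1 := Set.uIcc_of_le ht
  have hcongr : (∫ u in t..1, (min s u - s * u) / u ^ 2)
      = ∫ u in t..1, (s - s * u) / u ^ 2 := by
    apply intervalIntegral.integral_congr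
    intro u hu
    rw [huIcc] at hu
    have h : s ⊓ u = s := inf_eq_left.mpr (hst.trans hu.1)
    simp only [h]
  rw [hcongr]
  have key : ∀ u ∈ Set.uIcc t 1, HasDerivAt (fun u : ℝ => -s * u⁻¹ - s * Real.log u)
      ((s - s * u) / u ^ 2) u := by
    intro u hu
    rw [huIcc] at hu
    have hu0 : u ≠ 0 := (ht0.trans_le hu.1).ne'
    have h := ((hasDerivAt_inv hu0).const_mul (-s)).sub
      ((Real.hasDerivAt_log hu0).const_mul s)
    refine h.congr_deriv ?_
    field_simp
  have hint : IntervalIntegrable (fun u : ℝ => (s - s * u) / u ^ 2) MeasureTheory.volume t 1 := by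
    apply ContinuousOn.intervalIntegrable
    apply ContinuousOn.div (by fun_prop) (by fun_prop)
    intro u hu
    rw [huIcc] at hu
    have := ht0.trans_le hu.1
    positivity
  rw [intervalIntegral.integral_eq_sub_of_hasDerivAt key hint]
  simp [Real.log_one]
  field_simp
  ring

lemma myI3 (s t : ℝ) (hs : 0 < s) (hst : s ≤ t) (ht : t ≤ 1) :
    (∫ u in s..1, (min t u - t * u) / u ^ 2)
      = (1 - t) * (Real.log t - Real.log s) + 1 - t + t * Real.log t := by
  have ht0 : 0 < t := hs.trans_le hst
  have hsplit : (∫ u in s..1, (min t u - t * u) / u ^ 2)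
      = (∫ u in s..t, (min t u - t * u) / u ^ 2) + ∫ u in t..1, (min t u - t * u) / u ^ 2 := by
    rw [intervalIntegral.integral_add_adjacent_intervals] <;>
    · apply ContinuousOn.intervalIntegrable
      apply ContinuousOn.div (by fun_prop) (by fun_prop)
      intro u hu
      rw [Set.uIcc_of_le (by linarith)] at hu
      have h0 : 0 < u := by rcases hu with ⟨h,_⟩; cases le_or_gt s u with
        | inl h' => linarith
        | inr h' => linarith
      positivity
  rw [hsplit]
  have h1 : (∫ u in s..t, (min t u - t * u) / u ^ 2)
      = (1 - t) * (Real.log t - Real.log s) := by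
    have hcongr : (∫ u in s..t, (min t u - t * u) / u ^ 2)
        = ∫ u in s..t, (u - t * u) / u ^ 2 := by
      apply intervalIntegral.integral_congr
      intro u hu
      rw [Set.uIcc_of_le hst] at hu
      have h : t ⊓ u = u := inf_eq_right.mpr hu.2
      simp only [h]
    rw [hcongr]
    have key : ∀ u ∈ Set.uIcc s t, HasDerivAt (fun u : ℝ => (1 - t) * Real.log u)
        ((u - t * u) / u ^ 2) u := by
      intro u hu
      rw [Set.uIcc_of_le hst] at hu
      have hu0 : u ≠ 0 := (hs.trans_le hu.1).ne'
      have h := (Real.hasDerivAt_log hu0).const_mul (1 - t)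
      refine h.congr_deriv ?_
      field_simp
    have hint : IntervalIntegrable (fun u : ℝ => (u - t * u) / u ^ 2) MeasureTheory.volume s t := by
      apply ContinuousOn.intervalIntegrable
      apply ContinuousOn.div (by fun_prop) (by fun_prop)
      intro u hu
      rw [Set.uIcc_of_le hst] at hu
      have := hs.trans_le hu.1
      positivity
    rw [intervalIntegral.integral_eq_sub_of_hasDerivAt key hint]
    ring
  have h2 : (∫ u in t..1, (min t u - t * u) / u ^ 2)
      = 1 - t + t * Real.log t := by
    have hcongr : (∫ u in t..1, (min t u - t * u) / u ^ 2)
        = ∫ u in t..1, (t - t * u) / u ^ 2 := by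
      apply intervalIntegral.integral_congr
      intro u hu
      rw [Set.uIcc_of_le ht] at hu
      have h : t ⊓ u = t := inf_eq_left.mpr hu.1
      simp only [h]
    rw [hcongr]
    have key : ∀ u ∈ Set.uIcc t 1, HasDerivAt (fun u : ℝ => -t * u⁻¹ - t * Real.log u)
        ((t - t * u) / u ^ 2) u := by
      intro u hu
      rw [Set.uIcc_of_le ht] at hu
      have hu0 : u ≠ 0 := (ht0.trans_le hu.1).ne'
      have h := ((hasDerivAt_inv hu0).const_mul (-t)).sub
        ((Real.hasDerivAt_log hu0).const_mul t)
      refine h.congr_deriv ?_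
      field_simp
    have hint : IntervalIntegrable (fun u : ℝ => (t - t * u) / u ^ 2) MeasureTheory.volume t 1 := by
      apply ContinuousOn.intervalIntegrable
      apply ContinuousOn.div (by fun_prop) (by fun_prop)
      intro u hu
      rw [Set.uIcc_of_le ht] at hu
      have := ht0.trans_le hu.1
      positivity
    rw [intervalIntegral.integral_eq_sub_of_hasDerivAt key hint]
    simp [Real.log_one]
    field_simp
    ring
  rw [h1, h2]
  ring

lemma myInner (s y : ℝ) (hs : 0 < s) (hsy : s ≤ y) (hy : y ≤ 1) :
    (∫ x in s..1, min x y / (x ^ 2 * y ^ 2))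
      = (Real.log y - Real.log s) / y ^ 2 + 1 / y ^ 2 - 1 / y := by
  have hy0 : 0 < y := hs.trans_le hsy
  have hsplit : (∫ x in s..1, min x y / (x ^ 2 * y ^ 2))
      = (∫ x in s..y, min x y / (x ^ 2 * y ^ 2)) + ∫ x in y..1, min x y / (x ^ 2 * y ^ 2) := by
    rw [intervalIntegral.integral_add_adjacent_intervals] <;>
    · apply ContinuousOn.intervalIntegrable
      apply ContinuousOn.div (by fun_prop) (by fun_prop)
      intro x hx
      first
      | (rw [Set.uIcc_of_le hsy] at hx; have := hs.trans_le hx.1; positivity)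
      | (rw [Set.uIcc_of_le hy] at hx; have := hy0.trans_le hx.1; positivity)
  rw [hsplit]
  have h1 : (∫ x in s..y, min x y / (x ^ 2 * y ^ 2))
      = (Real.log y - Real.log s) / y ^ 2 := by
    have hcongr : (∫ x in s..y, min x y / (x ^ 2 * y ^ 2))
        = ∫ x in s..y, x / (x ^ 2 * y ^ 2) := by
      apply intervalIntegral.integral_congr
      intro x hx
      rw [Set.uIcc_of_le hsy] at hx
      have h : x ⊓ y = x := inf_eq_left.mpr hx.2
      simp only [h]
    rw [hcongr]
    have key : ∀ x ∈ Set.uIcc s y, HasDerivAt (fun x : ℝ => Real.log x / y ^ 2)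
        (x / (x ^ 2 * y ^ 2)) x := by
      intro x hx
      rw [Set.uIcc_of_le hsy] at hx
      have hx0 : x ≠ 0 := (hs.trans_le hx.1).ne'
      have h := (Real.hasDerivAt_log hx0).div_const (y ^ 2)
      refine h.congr_deriv ?_
      field_simp
    have hint : IntervalIntegrable (fun x : ℝ => x / (x ^ 2 * y ^ 2)) MeasureTheory.volume s y := by
      apply ContinuousOn.intervalIntegrable
      apply ContinuousOn.div (by fun_prop) (by fun_prop)
      intro x hx
      rw [Set.uIcc_of_le hsy] at hx
      have := hs.trans_le hx.1
      positivity
    rw [intervalIntegral.integral_eq_sub_of_hasDerivAt key hint]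
    ring
  have h2 : (∫ x in y..1, min x y / (x ^ 2 * y ^ 2)) = 1 / y ^ 2 - 1 / y := by
    have hcongr : (∫ x in y..1, min x y / (x ^ 2 * y ^ 2))
        = ∫ x in y..1, y / (x ^ 2 * y ^ 2) := by
      apply intervalIntegral.integral_congr
      intro x hx
      rw [Set.uIcc_of_le hy] at hx
      have h : x ⊓ y = y := inf_eq_right.mpr hx.1
      simp only [h]
    rw [hcongr]
    have key : ∀ x ∈ Set.uIcc y 1, HasDerivAt (fun x : ℝ => -(x⁻¹) / y)
        (y / (x ^ 2 * y ^ 2)) x := by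
      intro x hx
      rw [Set.uIcc_of_le hy] at hx
      have hx0 : x ≠ 0 := (hy0.trans_le hx.1).ne'
      have h := ((hasDerivAt_inv hx0).neg).div_const y
      refine h.congr_deriv ?_
      field_simp
    have hint : IntervalIntegrable (fun x : ℝ => y / (x ^ 2 * y ^ 2)) MeasureTheory.volume y 1 := by
      apply ContinuousOn.intervalIntegrable
      apply ContinuousOn.div (by fun_prop) (by fun_prop)
      intro x hx
      rw [Set.uIcc_of_le hy] at hx
      have := hy0.trans_le hx.1
      positivity
    rw [intervalIntegral.integral_eq_sub_of_hasDerivAt key hint]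
    field_simp
    ring
  rw [h1, h2]
  ring

lemma myI1 (s t : ℝ) (hs : 0 < s) (hst : s ≤ t) (ht : t ≤ 1) :
    (∫ y in t..1, ∫ x in s..1, min x y / (x ^ 2 * y ^ 2))
      = Real.log s - 2 + (Real.log t - Real.log s) / t + 2 / t + Real.log t := by
  have ht0 : 0 < t := hs.trans_le hst
  have hcongr : (∫ y in t..1, ∫ x in s..1, min x y / (x ^ 2 * y ^ 2))
      = ∫ y in t..1, ((Real.log y - Real.log s) / y ^ 2 + 1 / y ^ 2 - 1 / y) := by
    apply intervalIntegral.integral_congr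
    intro y hy
    rw [Set.uIcc_of_le ht] at hy
    exact myInner s y hs (hst.trans hy.1) hy.2
  rw [hcongr]
  have key : ∀ y ∈ Set.uIcc t 1, HasDerivAt
      (fun y : ℝ => -((Real.log y - Real.log s) / y) - 2 * y⁻¹ - Real.log y)
      ((Real.log y - Real.log s) / y ^ 2 + 1 / y ^ 2 - 1 / y) y := by
    intro y hy
    rw [Set.uIcc_of_le ht] at hy
    have hy0 : 0 < y := ht0.trans_le hy.1
    have hlog := Real.hasDerivAt_log hy0.ne'
    have h1 : HasDerivAt (fun y : ℝ => (Real.log y - Real.log s) / y)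
        ((y⁻¹ * y - (Real.log y - Real.log s) * 1) / y ^ 2) y :=
      (hlog.sub_const (Real.log s)).div (hasDerivAt_id y) hy0.ne'
    have h := ((h1.neg).sub ((hasDerivAt_inv hy0.ne').const_mul 2)).sub hlog
    refine h.congr_deriv ?_
    field_simp
    ring
  have hint : IntervalIntegrable
      (fun y : ℝ => (Real.log y - Real.log s) / y ^ 2 + 1 / y ^ 2 - 1 / y)
      MeasureTheory.volume t 1 := by
    apply ContinuousOn.intervalIntegrable
    have hpos : ∀ y ∈ Set.uIcc t 1, y ≠ 0 := by
      intro y hy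
      rw [Set.uIcc_of_le ht] at hy
      exact (ht0.trans_le hy.1).ne'
    apply ContinuousOn.sub
    apply ContinuousOn.add
    · exact ContinuousOn.div ((Real.continuousOn_log.mono (by intro y hy; simpa using hpos y hy)).sub continuousOn_const) (by fun_prop) (by intro y hy; have := hpos y hy; positivity)
    · exact ContinuousOn.div continuousOn_const (by fun_prop) (by intro y hy; have := hpos y hy; positivity)
    · exact ContinuousOn.div continuousOn_const continuousOn_id (by intro y hy; exact hpos y hy)
  rw [intervalIntegral.integral_eq_sub_of_hasDerivAt key hint]
  simp [Real.log_one]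
  field_simp
  ring

/-- Covariance computation for the Gaussian martingale limit `𝔾` of the Extreme
Nelson–Aalen estimator: with `I₁, I₂, I₃` as in the paper (stated here for `s ≤ t`,
the `t ≤ s` case being symmetric),
`C(s,t) = p²(s⁻¹∧t⁻¹ - 1) + p(1-p)(s⁻¹∧t⁻¹ - 1) + p(1-p)I₁ - (1/s)p(1-p)I₂ - (1/t)p(1-p)I₃`
equals `p(s⁻¹∧t⁻¹ - 1)`. -/
theorem covariance_Z (p s t : ℝ) (hp0 : 0 < p) (hp1 : p ≤ 1)
    (hs : 0 < s) (hst : s ≤ t) (ht : t ≤ 1)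
    (I1 I2 I3 : ℝ)
    (hI1 : I1 = ∫ y in t..1, ∫ x in s..1, min x y / (x ^ 2 * y ^ 2))
    (hI2 : I2 = ∫ u in t..1, (min s u - s * u) / u ^ 2)
    (hI3 : I3 = ∫ u in s..1, (min t u - t * u) / u ^ 2) :
    p ^ 2 * (min s⁻¹ t⁻¹ - 1) + p * (1 - p) * (min s⁻¹ t⁻¹ - 1)
        + p * (1 - p) * I1 - (1 / s) * (p * (1 - p)) * I2 - (1 / t) * (p * (1 - p)) * I3
      = p * (min s⁻¹ t⁻¹ - 1) := by
  have ht0 : 0 < t := hs.trans_le hst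
  have hmin : min s⁻¹ t⁻¹ = t⁻¹ := min_eq_right (by gcongr)
  rw [hmin, hI1, hI2, hI3, myI1 s t hs hst ht, myI2 s t hs hst ht, myI3 s t hs hst ht]
  field_simp
  ring
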